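/- arXiv:1802.06127 — 4 statements merged into one kernel-verified Lean document; each statement's English description precedes it below -/
import Mathlib

section
/- Let 0 < q < 1, n ∈ ℕ with n ≥ 1, and y ∈ (q,1]. Then the doubly infinite series ∑_{k∈ℤ} [ q^{−n(n−1)}(q^k y)^{2n} / (1 + q^{−n(n−1)}(q^k y)^{2n}) + 1 / (1 + q^{n(n+1)}(q^k y)^{2n}) − 1 ] converges absolutely and its sum equals n. -/
open Filter Finset

lemma tele_hasSum (c r : ℝ) (hc0 : 0 < c) (hr0 : 0 < r) (hr1 : r < 1) (n : ℕ) :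
    HasSum (fun k : ℤ => 1 / (1 + c * r ^ (k + (n : ℤ))) - 1 / (1 + c * r ^ k)) ((n : ℝ)) := by
  set a : ℤ → ℝ := fun k => c * r ^ k with hadef
  have ha0 : ∀ k, 0 < a k := fun k => mul_pos hc0 (zpow_pos hr0 _)
  have hden : ∀ k, 0 < 1 + a k := fun k => by linarith [ha0 k]
  set g : ℤ → ℝ := fun k => 1 / (1 + a k) with hgdef
  have hg0 : ∀ k, 0 < g k := fun k => div_pos one_pos (hden k)
  have hg1 : ∀ k, g k ≤ 1 := fun k => by
    rw [hgdef]
    exact div_le_one_of_le₀ (by linarith [ha0 k]) (hden k).le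
  set d : ℤ → ℝ := fun k => g (k + 1) - g k with hddef
  clear_value a g d
  have hamono : ∀ k : ℤ, a (k + 1) ≤ a k := by
    intro k
    have : r ^ (k + 1) ≤ r ^ k := by
      rw [zpow_add₀ hr0.ne', zpow_one]
      nlinarith [zpow_pos hr0 k]
    simpa [hadef] using mul_le_mul_of_nonneg_left this hc0.le
  have hgmono : ∀ k : ℤ, g k ≤ g (k + 1) := by
    intro k
    rw [hgdef]
    exact one_div_le_one_div_of_le (hden (k + 1)) (by linarith [hamono k])
  have hd0 : ∀ k, 0 ≤ d k := by
    intro k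
    rw [hddef]
    simp only
    linarith [hgmono k]
  -- upper bound g by 1/a
  have hgle : ∀ k, g k ≤ (a k)⁻¹ := by
    intro k
    rw [hgdef]
    simp only [one_div]
    exact inv_anti₀ (ha0 k) (by linarith [ha0 k])
  -- d k ≤ a k
  have hdle : ∀ k, d k ≤ a k := by
    intro k
    have h1 : 1 - a k ≤ g k := by
      rw [hgdef, le_div_iff₀ (hden k)]
      nlinarith [sq_nonneg (a k)]
    have h2 : g (k + 1) ≤ 1 := hg1 _
    simp only [hddef]
    linarith
  -- summability of d
  have hsd : Summable d := by
    apply Summable.of_nat_of_neg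
    · apply Summable.of_nonneg_of_le (fun N => hd0 _) (fun N => ?_)
        (((summable_geometric_of_lt_one hr0.le hr1)).mul_left c)
      calc d (N : ℤ) ≤ a (N : ℤ) := hdle _
        _ = c * r ^ N := by rw [hadef]; simp [zpow_natCast]
    · apply Summable.of_nonneg_of_le (fun N => hd0 _) (fun N => ?_)
        (((summable_geometric_of_lt_one hr0.le hr1)).mul_left (c⁻¹ * r⁻¹))
      have h1 : d (-(N : ℤ)) ≤ g (-(N : ℤ) + 1) := by
        simp only [hddef]
        linarith [hg0 (-(N : ℤ))]
      have h2 : g (-(N : ℤ) + 1) ≤ (a (-(N : ℤ) + 1))⁻¹ := hgle _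
      have h3 : (a (-(N : ℤ) + 1))⁻¹ = c⁻¹ * r⁻¹ * r ^ N := by
        rw [hadef]
        simp only
        rw [mul_inv, zpow_add₀ hr0.ne', zpow_one, mul_inv, zpow_neg, inv_inv,
          zpow_natCast]
        ring
      rw [← h3]
      exact h1.trans h2
  -- telescoping over Icc
  have tele : ∀ N : ℕ, ∑ k ∈ Finset.Icc (-(N : ℤ)) (N : ℤ), d k
      = g ((N : ℤ) + 1) - g (-(N : ℤ)) := by
    intro N
    induction N with
    | zero => simp [hddef]
    | succ N ih =>
        push_cast
        have hset : Finset.Icc (-((N : ℤ) + 1)) ((N : ℤ) + 1)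
            = insert (-((N : ℤ) + 1)) (insert ((N : ℤ) + 1) (Finset.Icc (-(N : ℤ)) (N : ℤ))) := by
          ext x
          simp only [Finset.mem_Icc, Finset.mem_insert]
          omega
        have h1 : (-((N : ℤ) + 1)) ∉ insert ((N : ℤ) + 1) (Finset.Icc (-(N : ℤ)) (N : ℤ)) := by
          simp only [Finset.mem_insert, Finset.mem_Icc]
          omega
        have h2 : ((N : ℤ) + 1) ∉ Finset.Icc (-(N : ℤ)) (N : ℤ) := by
          simp only [Finset.mem_Icc]
          omega
        rw [hset, Finset.sum_insert h1, Finset.sum_insert h2, ih]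
        simp only [hddef]
        rw [show (-((N : ℤ) + 1) + 1) = -(N : ℤ) by ring]
        ring
  -- limits
  have hlim1 : Tendsto (fun N : ℕ => g ((N : ℤ) + 1)) atTop (nhds 1) := by
    have he : ∀ N : ℕ, g ((N : ℤ) + 1) = 1 / (1 + (c * r) * r ^ N) := by
      intro N
      rw [hgdef, hadef]
      simp only
      rw [zpow_add₀ hr0.ne', zpow_one, zpow_natCast]
      ring_nf
    simp only [he]
    have h0 : Tendsto (fun N : ℕ => 1 + (c * r) * r ^ N) atTop (nhds 1) := by
      have := (tendsto_pow_atTop_nhds_zero_of_lt_one hr0.le hr1).const_mul (c * r)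
      simpa using tendsto_const_nhds.add this
    have h1 := h0.inv₀ one_ne_zero
    simp only [one_div]
    simpa using h1
  have hlim2 : Tendsto (fun N : ℕ => g (-(N : ℤ))) atTop (nhds 0) := by
    apply squeeze_zero (fun N => (hg0 _).le) (fun N => ?_)
      (g := fun N : ℕ => c⁻¹ * r ^ N)
    · have := (tendsto_pow_atTop_nhds_zero_of_lt_one hr0.le hr1).const_mul c⁻¹
      simpa using this
    · show g (-(N : ℤ)) ≤ c⁻¹ * r ^ N
      have h2 : g (-(N : ℤ)) ≤ (a (-(N : ℤ)))⁻¹ := hgle _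
      have h3 : (a (-(N : ℤ)))⁻¹ = c⁻¹ * r ^ N := by
        rw [hadef]
        simp only
        rw [mul_inv, zpow_neg, inv_inv, zpow_natCast]
      rw [← h3]
      exact h2
  -- HasSum d 1
  have hIcc : Tendsto (fun N : ℕ => Finset.Icc (-(N : ℤ)) (N : ℤ)) atTop atTop := by
    apply tendsto_atTop_finset_of_monotone
    · intro M N h
      apply Finset.Icc_subset_Icc <;> omega
    · intro k
      exact ⟨k.natAbs, by simp only [Finset.mem_Icc]; omega⟩
  have hd1 : HasSum d 1 := by
    have hcomp : Tendsto (fun N : ℕ => ∑ k ∈ Finset.Icc (-(N : ℤ)) (N : ℤ), d k)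
        atTop (nhds (∑' k, d k)) := hsd.hasSum.comp hIcc
    have hcomp2 : Tendsto (fun N : ℕ => g ((N : ℤ) + 1) - g (-(N : ℤ)))
        atTop (nhds (∑' k, d k)) := by
      apply hcomp.congr
      intro N
      exact tele N
    have hP : Tendsto (fun N : ℕ => g ((N : ℤ) + 1) - g (-(N : ℤ))) atTop (nhds 1) := by
      have := hlim1.sub hlim2
      simpa using this
    have : (∑' k, d k) = 1 := tendsto_nhds_unique hcomp2 hP
    exact this ▸ hsd.hasSum
  -- shifted sums
  have hshift : ∀ j : ℕ, HasSum (fun k : ℤ => d (k + (j : ℤ))) 1 := by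
    intro j
    exact ((Equiv.addRight (j : ℤ)).hasSum_iff).2 hd1
  have htot : HasSum (fun k : ℤ => ∑ j ∈ Finset.range n, d (k + (j : ℤ))) ((n : ℝ)) := by
    have := hasSum_sum (s := Finset.range n) (f := fun (j : ℕ) (k : ℤ) => d (k + (j : ℤ)))
      (a := fun _ => (1 : ℝ)) (fun j _ => hshift j)
    simpa using this
  have hfe : ∀ k : ℤ, ∑ j ∈ Finset.range n, d (k + (j : ℤ)) = g (k + (n : ℤ)) - g k := by
    intro k
    have hts := Finset.sum_range_sub (f := fun j : ℕ => g (k + (j : ℤ))) n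
    calc ∑ j ∈ Finset.range n, d (k + (j : ℤ))
        = ∑ j ∈ Finset.range n, (g (k + ((j:ℕ) + 1 : ℕ)) - g (k + (j : ℤ))) := by
          apply Finset.sum_congr rfl
          intro j _
          simp only [hddef]
          rw [show (k + (((j:ℕ) + 1 : ℕ) : ℤ)) = k + (j : ℤ) + 1 by push_cast; ring]
      _ = g (k + (n : ℤ)) - g (k + ((0:ℕ) : ℤ)) := hts
      _ = g (k + (n : ℤ)) - g k := by norm_num
  have hee : (fun k : ℤ => ∑ j ∈ Finset.range n, d (k + (j : ℤ)))
      = fun k : ℤ => 1 / (1 + c * r ^ (k + (n : ℤ))) - 1 / (1 + c * r ^ k) := by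
    funext k
    rw [hfe k]
    simp only [hgdef, hadef]
  rw [← hee]
  exact htot

theorem stmt_3 (q y : ℝ) (hq0 : 0 < q) (hq1 : q < 1) (n : ℕ) (hn : 1 ≤ n)
    (hy : y ∈ Set.Ioc q 1) :
    Summable (fun k : ℤ =>
      |q ^ (-((n : ℤ) * ((n : ℤ) - 1))) * (q ^ k * y) ^ (2 * n) /
          (1 + q ^ (-((n : ℤ) * ((n : ℤ) - 1))) * (q ^ k * y) ^ (2 * n)) +
        1 / (1 + q ^ ((n : ℤ) * ((n : ℤ) + 1)) * (q ^ k * y) ^ (2 * n)) - 1|) ∧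
    HasSum (fun k : ℤ =>
      q ^ (-((n : ℤ) * ((n : ℤ) - 1))) * (q ^ k * y) ^ (2 * n) /
          (1 + q ^ (-((n : ℤ) * ((n : ℤ) - 1))) * (q ^ k * y) ^ (2 * n)) +
        1 / (1 + q ^ ((n : ℤ) * ((n : ℤ) + 1)) * (q ^ k * y) ^ (2 * n)) - 1)
      (n : ℝ) := by
  obtain ⟨hqy, hy1⟩ := hy
  have hqne : q ≠ 0 := hq0.ne'
  have hy0 : (0 : ℝ) < y := hq0.trans hqy
  set r : ℝ := q ^ (2 * n) with hrdef
  have hr0 : 0 < r := pow_pos hq0 _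
  have hr1 : r < 1 := pow_lt_one₀ hq0.le hq1 (by omega)
  set c : ℝ := q ^ (-((n : ℤ) * ((n : ℤ) - 1))) * y ^ (2 * n) with hcdef
  have hc0 : 0 < c := mul_pos (zpow_pos hq0 _) (pow_pos hy0 _)
  have epow : ∀ k : ℤ, (q ^ k * y) ^ (2 * n) = q ^ (((2 * n : ℕ) : ℤ) * k) * y ^ (2 * n) := by
    intro k
    rw [mul_pow, ← zpow_natCast (q ^ k) (2 * n), ← zpow_mul, mul_comm k]
  have erk : ∀ k : ℤ, r ^ k = q ^ (((2 * n : ℕ) : ℤ) * k) := by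
    intro k
    rw [hrdef, ← zpow_natCast q (2 * n), ← zpow_mul]
  have eT1 : ∀ k : ℤ, q ^ (-((n : ℤ) * ((n : ℤ) - 1))) * (q ^ k * y) ^ (2 * n) = c * r ^ k := by
    intro k
    rw [epow, erk, hcdef]
    ring
  have eT2 : ∀ k : ℤ, q ^ ((n : ℤ) * ((n : ℤ) + 1)) * (q ^ k * y) ^ (2 * n)
      = c * r ^ (k + (n : ℤ)) := by
    intro k
    rw [epow, erk, hcdef]
    rw [show q ^ ((n : ℤ) * ((n : ℤ) + 1)) * (q ^ (((2 * n : ℕ) : ℤ) * k) * y ^ (2 * n))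
        = (q ^ ((n : ℤ) * ((n : ℤ) + 1)) * q ^ (((2 * n : ℕ) : ℤ) * k)) * y ^ (2 * n) from by ring,
      ← zpow_add₀ hqne]
    rw [show (q ^ (-((n : ℤ) * ((n : ℤ) - 1))) * y ^ (2 * n)) * q ^ (((2 * n : ℕ) : ℤ) * (k + (n : ℤ)))
        = q ^ (-((n : ℤ) * ((n : ℤ) - 1)) + ((2 * n : ℕ) : ℤ) * (k + (n : ℤ))) * y ^ (2 * n) from by
        rw [zpow_add₀ hqne]; ring]
    congr 2
    push_cast
    ring
  have hfun : ∀ k : ℤ,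
      q ^ (-((n : ℤ) * ((n : ℤ) - 1))) * (q ^ k * y) ^ (2 * n) /
          (1 + q ^ (-((n : ℤ) * ((n : ℤ) - 1))) * (q ^ k * y) ^ (2 * n)) +
        1 / (1 + q ^ ((n : ℤ) * ((n : ℤ) + 1)) * (q ^ k * y) ^ (2 * n)) - 1
      = 1 / (1 + c * r ^ (k + (n : ℤ))) - 1 / (1 + c * r ^ k) := by
    intro k
    rw [eT1, eT2]
    have h1 : (0 : ℝ) < 1 + c * r ^ k := by positivity
    have h2 : (0 : ℝ) < 1 + c * r ^ (k + (n : ℤ)) := by positivity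
    field_simp
    ring
  have H := tele_hasSum c r hc0 hr0 hr1 n
  have H2 : HasSum (fun k : ℤ =>
      q ^ (-((n : ℤ) * ((n : ℤ) - 1))) * (q ^ k * y) ^ (2 * n) /
          (1 + q ^ (-((n : ℤ) * ((n : ℤ) - 1))) * (q ^ k * y) ^ (2 * n)) +
        1 / (1 + q ^ ((n : ℤ) * ((n : ℤ) + 1)) * (q ^ k * y) ^ (2 * n)) - 1)
      (n : ℝ) := by
    have e := funext hfun
    rw [e]
    exact H
  exact ⟨H2.summable.abs, H2⟩
end

section
/- Let 0 < q < 1, n ∈ ℕ with n ≥ 1, and y ∈ (q,1]. Then ∑_{k∈ℤ} [ q^{n(n+1)}(q^k y)^{2n} / (1 + q^{n(n+1)}(q^k y)^{2n}) + 1 / (1 + q^{−n(n−1)}(q^k y)^{2n}) − 1 ] converges absolutely with sum equal to −n. -/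
open Finset Filter Topology

theorem stmt_4 (q y : ℝ) (hq0 : 0 < q) (hq1 : q < 1) (n : ℕ) (hn : 1 ≤ n)
    (hy : y ∈ Set.Ioc q 1) :
    Summable (fun k : ℤ =>
      |q ^ ((n : ℤ) * ((n : ℤ) + 1)) * (q ^ k * y) ^ (2 * n) /
          (1 + q ^ ((n : ℤ) * ((n : ℤ) + 1)) * (q ^ k * y) ^ (2 * n)) +
        1 / (1 + q ^ (-((n : ℤ) * ((n : ℤ) - 1))) * (q ^ k * y) ^ (2 * n)) - 1|) ∧
    HasSum (fun k : ℤ =>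
      q ^ ((n : ℤ) * ((n : ℤ) + 1)) * (q ^ k * y) ^ (2 * n) /
          (1 + q ^ ((n : ℤ) * ((n : ℤ) + 1)) * (q ^ k * y) ^ (2 * n)) +
        1 / (1 + q ^ (-((n : ℤ) * ((n : ℤ) - 1))) * (q ^ k * y) ^ (2 * n)) - 1)
      (-(n : ℝ)) := by
  obtain ⟨hyq, hy1⟩ := hy
  have hy' : 0 < y := lt_trans hq0 hyq
  set a : ℝ := q ^ ((n : ℤ) * ((n : ℤ) + 1)) with ha
  set b : ℝ := q ^ (-((n : ℤ) * ((n : ℤ) - 1))) with hb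
  have hapos : 0 < a := zpow_pos hq0 _
  have hbpos : 0 < b := zpow_pos hq0 _
  set x : ℤ → ℝ := fun k => (q ^ k * y) ^ (2 * n) with hx
  have hxpos : ∀ k, 0 < x k := fun k => pow_pos (mul_pos (zpow_pos hq0 k) hy') _
  set h : ℤ → ℝ := fun k => 1 / (1 + b * x k) with hh
  set F : ℤ → ℝ := fun k => a * x k / (1 + a * x k) + 1 / (1 + b * x k) - 1 with hFd
  -- key exponent identity
  have key : ∀ k : ℤ, a * x k = b * x (k + n) := by
    intro k
    have h1 : x (k + (n : ℤ)) = x k * q ^ ((n : ℤ) * (2 * n : ℤ)) := by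
      have e : q ^ ((n : ℤ) * (2 * n : ℤ)) = (q ^ (n : ℤ)) ^ (2 * n) := by
        rw [← zpow_natCast (q ^ (n : ℤ)) (2 * n), ← zpow_mul]
        try congr 1
        all_goals (push_cast; ring)
      simp only [hx]
      rw [e, zpow_add₀ hq0.ne']
      ring
    rw [h1, ha, hb, mul_comm (x k), ← mul_assoc, ← zpow_add₀ hq0.ne']
    congr 1
    ring
  have hab : a ≤ b := by
    apply zpow_le_zpow_right_of_le_one₀ hq0  hq1.le
    nlinarith [sq_nonneg (n : ℤ), (by exact_mod_cast Nat.zero_le n : (0:ℤ) ≤ n)]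
  -- F = h k - h (k+n)
  have hF : ∀ k : ℤ, F k = h k - h (k + n) := by
    intro k
    simp only [hFd, hh, ← key k]
    have h2 : (0:ℝ) < 1 + a * x k := by positivity
    have h3 : (0:ℝ) < 1 + b * x k := by positivity
    field_simp
    ring
  have hFnonpos : ∀ k : ℤ, F k ≤ 0 := by
    intro k
    rw [hF k]
    have : h k ≤ h (k + n) := by
      simp only [hh, ← key k]
      apply div_le_div_of_nonneg_left one_pos.le (by positivity)
      have := hxpos k
      nlinarith
    linarith
  have hhpos : ∀ k, 0 < h k := fun k => by
    simp only [hh]; positivity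
  have hhle : ∀ k, h k ≤ 1 := fun k => by
    simp only [hh]
    rw [div_le_one (by positivity)]
    nlinarith [hxpos k, hbpos]
  set H : ℤ → ℝ := fun k => ∑ i ∈ range n, h (k + i) with hHd
  have hHnonneg : ∀ k, 0 ≤ H k := fun k =>
    Finset.sum_nonneg fun i _ => (hhpos _).le
  have hHle : ∀ k, H k ≤ n := fun k => by
    calc H k ≤ ∑ i ∈ range n, 1 := Finset.sum_le_sum fun i _ => hhle _
    _ = n := by simp
  have hHtel : ∀ k : ℤ, H k - H (k + 1) = h k - h (k + n) := by
    intro k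
    have e1 : H (k + 1) = ∑ i ∈ range n, (fun i : ℕ => h (k + i)) (i + 1) := by
      refine Finset.sum_congr rfl fun i _ => ?_
      beta_reduce
      congr 1
      push_cast
      ring
    have e0 : H k = ∑ i ∈ range n, (fun i : ℕ => h (k + i)) i := rfl
    rw [e0, e1, ← Finset.sum_sub_distrib,
      Finset.sum_range_sub' (fun i : ℕ => h (k + i)) n]
    simp
  have hFtel : ∀ k : ℤ, F k = H k - H (k + 1) := fun k => by
    rw [hF k, hHtel k]
  -- limits
  have L1 : Tendsto (fun m : ℕ => h (m : ℤ)) atTop (𝓝 1) := by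
    have t0 : Tendsto (fun m : ℕ => b * (q ^ m * y) ^ (2 * n)) atTop (𝓝 0) := by
      have : Tendsto (fun m : ℕ => q ^ m * y) atTop (𝓝 0) := by
        simpa using (tendsto_pow_atTop_nhds_zero_of_lt_one hq0.le hq1).mul_const y
      have := (this.pow (2 * n)).const_mul b
      simpa [zero_pow (by omega : 2 * n ≠ 0)] using this
    have lim : Tendsto (fun m : ℕ => (1 + b * (q ^ m * y) ^ (2 * n))⁻¹)
        atTop (𝓝 1) := by
      simpa using (t0.const_add 1).inv₀ (by norm_num)
    refine lim.congr fun m => ?_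
    simp only [hh, hx, one_div, zpow_natCast]
  have L2 : Tendsto (fun m : ℕ => h (-(m : ℤ))) atTop (𝓝 0) := by
    have t1 : Tendsto (fun m : ℕ => q ^ (-(m : ℤ)) * y) atTop atTop := by
      have : Tendsto (fun m : ℕ => (q⁻¹) ^ m) atTop atTop :=
        tendsto_pow_atTop_atTop_of_one_lt ((one_lt_inv₀ hq0).mpr hq1)
      have := this.atTop_mul_const hy'
      refine this.congr fun m => ?_
      rw [zpow_neg, zpow_natCast, inv_pow]
    have t2 : Tendsto (fun m : ℕ => 1 + b * (q ^ (-(m : ℤ)) * y) ^ (2 * n))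
        atTop atTop := by
      apply tendsto_atTop_add_const_left
      exact ((tendsto_pow_atTop (by omega : 2 * n ≠ 0)).comp t1).const_mul_atTop hbpos
    have := t2.inv_tendsto_atTop
    simp only [hh, hx]
    simpa [one_div, Pi.inv_def] using this
  have LH1 : Tendsto (fun m : ℕ => H (m : ℤ)) atTop (𝓝 n) := by
    have : Tendsto (fun m : ℕ => ∑ i ∈ range n, h ((m : ℤ) + i)) atTop
        (𝓝 (∑ i ∈ range n, (1:ℝ))) := by
      apply tendsto_finset_sum
      intro i _
      have : Tendsto (fun m : ℕ => h ((m + i : ℕ) : ℤ)) atTop (𝓝 1) :=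
        L1.comp (tendsto_add_atTop_nat i)
      refine this.congr fun m => ?_
      push_cast
      ring_nf
    simpa using this
  have LH2 : Tendsto (fun m : ℕ => H (-(m : ℤ))) atTop (𝓝 0) := by
    have : Tendsto (fun m : ℕ => ∑ i ∈ range n, h (-(m : ℤ) + i)) atTop
        (𝓝 (∑ i ∈ range n, (0:ℝ))) := by
      apply tendsto_finset_sum
      intro i _
      have base : Tendsto (fun m : ℕ => h (-((m - i : ℕ) : ℤ))) atTop (𝓝 0) :=
        L2.comp (tendsto_sub_atTop_nat i)
      apply base.congr'
      filter_upwards [eventually_ge_atTop i] with m hm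
      congr 1
      have : ((m - i : ℕ) : ℤ) = (m : ℤ) - i := by
        exact_mod_cast Int.ofNat_sub hm
      rw [this]
      ring
    simpa using this
  -- summability of nat parts
  have hS1 : Summable (fun k : ℕ => F (k : ℤ)) := by
    rw [← summable_neg_iff]
    apply summable_of_sum_range_le (c := (n : ℝ))
      (fun k => by simpa using hFnonpos (k : ℤ))
    intro N
    have : ∀ k : ℕ, -F (k : ℤ) = H ((k + 1 : ℕ) : ℤ) - H (k : ℤ) := by
      intro k
      rw [hFtel]
      push_cast
      ring
    rw [Finset.sum_congr rfl fun k _ => this k,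
      Finset.sum_range_sub (fun k : ℕ => H (k : ℤ)) N]
    have := hHle (N : ℤ)
    have := hHnonneg (0 : ℤ)
    push_cast
    linarith
  have hS2 : Summable (fun k : ℕ => F (-(k : ℤ) - 1)) := by
    rw [← summable_neg_iff]
    apply summable_of_sum_range_le (c := (n : ℝ))
      (fun k => by simpa using hFnonpos _)
    intro N
    have : ∀ k : ℕ, -F (-(k : ℤ) - 1) = H (-((k : ℤ))) - H (-((k + 1 : ℕ) : ℤ)) := by
      intro k
      rw [hFtel]
      push_cast
      ring_nf
    rw [Finset.sum_congr rfl fun k _ => this k]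
    rw [Finset.sum_range_sub' (fun k : ℕ => H (-(k : ℤ))) N]
    have := hHle (0 : ℤ)
    have := hHnonneg (-(N : ℤ))
    push_cast
    simp only [Nat.cast_zero, neg_zero]
    linarith
  -- HasSum for nat parts
  have hHS1 : HasSum (fun k : ℕ => F (k : ℤ)) (H 0 - n) := by
    rw [hS1.hasSum_iff_tendsto_nat]
    have peq : ∀ N : ℕ, ∑ k ∈ range N, F (k : ℤ) = H 0 - H (N : ℤ) := by
      intro N
      have : ∀ k : ℕ, F (k : ℤ) = H (k : ℤ) - H ((k + 1 : ℕ) : ℤ) := by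
        intro k
        rw [hFtel]
        push_cast
        ring
      rw [Finset.sum_congr rfl fun k _ => this k,
        Finset.sum_range_sub' (fun k : ℕ => H (k : ℤ)) N]
      norm_num
    simp only [peq]
    exact (tendsto_const_nhds.sub LH1)
  have hHS2 : HasSum (fun k : ℕ => F (-(k : ℤ) - 1)) (-(H 0)) := by
    rw [hS2.hasSum_iff_tendsto_nat]
    have peq : ∀ N : ℕ, ∑ k ∈ range N, F (-(k : ℤ) - 1) = H (-(N : ℤ)) - H 0 := by
      intro N
      have : ∀ k : ℕ, F (-(k : ℤ) - 1) =
          H (-((k + 1 : ℕ) : ℤ)) - H (-(k : ℤ)) := by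
        intro k
        rw [hFtel]
        push_cast
        ring_nf
      rw [Finset.sum_congr rfl fun k _ => this k,
        Finset.sum_range_sub (fun k : ℕ => H (-(k : ℤ))) N]
      norm_num
    simp only [peq]
    simpa using (LH2.sub (tendsto_const_nhds (x := H 0)))
  have hHSF : HasSum F (-(n : ℝ)) := by
    have h2 : HasSum (fun k : ℕ => F (-(k : ℤ) - 1)) (-(H 0)) := hHS2
    have := HasSum.of_nat_of_neg_add_one hHS1 (by
      convert h2 using 2 with k
      push_cast
      ring_nf)
    convert this using 1
    ring
  constructor
  · have : Summable (fun k : ℤ => -F k) := hHSF.summable.neg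
    refine this.congr fun k => ?_
    rw [abs_of_nonpos (hFnonpos k)]
  · exact hHSF
end

section
/- Let 0 < q < 1, y ∈ (q,1], n ≥ 1, and let h, f_n : [0,∞) → ℝ be the Powers–Rieffel data: h(t) = √(φ(t)(1−φ(t))) on [q,1] and 0 elsewhere; f_n(t) = φ(t) on [q,1], 1 on (1,q^{−n+1}), 1−φ(q^n t) on [q^{−n+1},q^{−n}], 0 elsewhere, where φ : [q,1] → [0,1] is continuous with φ(q)=0, φ(1)=1. Define the operator R on ℓ²(ℤ) by R e_k = h(q^k y) e_{k−n} + f_n(q^k y) e_k + h(q^{k+n} y) e_{k+n}. Then R is a self-adjoint projection (R = R* = R²). -/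
theorem stmt_7 (q y : ℝ) (hq0 : 0 < q) (hq1 : q < 1) (hy : y ∈ Set.Ioc q 1)
    (n : ℕ) (hn : 1 ≤ n)
    (φ : ℝ → ℝ) (hφc : ContinuousOn φ (Set.Icc q 1))
    (hφ01 : ∀ t ∈ Set.Icc q 1, φ t ∈ Set.Icc (0 : ℝ) 1)
    (hφq : φ q = 0) (hφ1 : φ 1 = 1)
    (h f : ℝ → ℝ)
    (hh : ∀ t, h t = if t ∈ Set.Icc q 1 then Real.sqrt (φ t * (1 - φ t)) else 0)
    (hf : ∀ t, f t =
      if t ∈ Set.Icc q 1 then φ t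
      else if t ∈ Set.Ioo 1 (q ^ (-(n : ℤ) + 1)) then 1
      else if t ∈ Set.Icc (q ^ (-(n : ℤ) + 1)) (q ^ (-(n : ℤ))) then
        1 - φ (q ^ n * t)
      else 0)
    (e : ℤ → lp (fun _ : ℤ => ℂ) 2)
    (he : ∀ k : ℤ, e k = lp.single 2 k 1)
    (R : lp (fun _ : ℤ => ℂ) 2 →L[ℂ] lp (fun _ : ℤ => ℂ) 2)
    (hR : ∀ k : ℤ, R (e k) =
      (h (q ^ k * y) : ℂ) • e (k - n) + (f (q ^ k * y) : ℂ) • e k +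
        (h (q ^ (k + n) * y) : ℂ) • e (k + n)) :
    IsSelfAdjoint R ∧ R ∘L R = R := by
  obtain ⟨hyq, hy1⟩ := hy
  have hn' : (1 : ℤ) ≤ (n : ℤ) := by exact_mod_cast hn
  have hyIcc : y ∈ Set.Icc q 1 := ⟨hyq.le, hy1⟩
  have hΦ := hφ01 y hyIcc
  set Φ : ℝ := φ y with hΦdef
  set s : ℝ := Real.sqrt (Φ * (1 - Φ)) with hsdef
  have hs2 : s * s = Φ * (1 - Φ) :=
    Real.mul_self_sqrt (by nlinarith [hΦ.1, hΦ.2])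
  -- basic zpow facts
  have hqk_pos : ∀ k : ℤ, 0 < q ^ k := fun k => zpow_pos hq0 k
  have ht_lb : ∀ k : ℤ, q ^ (k + 1) < q ^ k * y := by
    intro k
    rw [zpow_add_one₀ hq0.ne']
    exact mul_lt_mul_of_pos_left hyq (hqk_pos k)
  have ht_ub : ∀ k : ℤ, q ^ k * y ≤ q ^ k := fun k =>
    mul_le_of_le_one_right (hqk_pos k).le hy1
  have hmono : ∀ {m k : ℤ}, m ≤ k → q ^ k ≤ q ^ m := fun {m k} hmk =>
    zpow_le_zpow_right_of_le_one₀ hq0 hq1.le hmk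
  have hone_le : ∀ {k : ℤ}, k ≤ 0 → (1:ℝ) ≤ q ^ k := by
    intro k hk
    have := hmono hk
    rwa [zpow_zero] at this
  -- the h-coefficients
  have hA : ∀ k : ℤ, h (q ^ k * y) = if k = 0 then s else 0 := by
    intro k
    rcases lt_trichotomy k 0 with hk | rfl | hk
    · rw [hh, if_neg, if_neg hk.ne]
      rintro ⟨-, h2⟩
      have h1' : (1:ℝ) ≤ q ^ (k + 1) := hone_le (by omega)
      linarith [ht_lb k]
    · rw [hh, zpow_zero, one_mul, if_pos hyIcc, if_pos rfl]
    · rw [hh, if_neg (by omega : ¬k = 0)]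
      split_ifs with hmem
      · have hk1 : q ^ k ≤ q := by
          have := hmono (by omega : 1 ≤ k); rwa [zpow_one] at this
        have : q ^ k * y = q := le_antisymm ((ht_ub k).trans hk1) hmem.1
        rw [this, hφq]
        simp
      · rfl
  -- the f-coefficients
  have hB : ∀ k : ℤ, f (q ^ k * y) =
      if k = 0 then Φ else if k = -(n:ℤ) then 1 - Φ
      else if -(n:ℤ) < k ∧ k < 0 then 1 else 0 := by
    intro k
    rcases lt_trichotomy k 0 with hk | rfl | hk
    · -- k < 0, so q^k*y > 1
      have h1' : (1:ℝ) < q ^ k * y := lt_of_le_of_lt (hone_le (by omega)) (ht_lb k)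
      have hnotIcc : q ^ k * y ∉ Set.Icc q 1 := by rintro ⟨-, h2⟩; linarith
      rcases lt_trichotomy k (-(n:ℤ)) with hkn | rfl | hkn
      · -- k < -n
        have ht : q ^ (-(n:ℤ)) < q ^ k * y := lt_of_le_of_lt (hmono (by omega)) (ht_lb k)
        have h3' : q ^ (-(n:ℤ)+1) ≤ q ^ (-(n:ℤ)) := hmono (by omega)
        rw [hf, if_neg hnotIcc, if_neg (by rintro ⟨-, hu⟩; linarith),
          if_neg (by rintro ⟨-, hu⟩; linarith), if_neg (by omega : ¬k = 0),
          if_neg (by omega : ¬k = -(n:ℤ)), if_neg (by omega : ¬(-(n:ℤ) < k ∧ k < 0))]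
      · -- k = -n
        have hu : q ^ (-(n:ℤ)) * y ≤ q ^ (-(n:ℤ)) := ht_ub _
        have hl : q ^ (-(n:ℤ) + 1) < q ^ (-(n:ℤ)) * y := ht_lb _
        rw [hf, if_neg hnotIcc, if_neg (by rintro ⟨-, h2⟩; linarith),
          if_pos ⟨hl.le, hu⟩, if_neg (by omega : ¬-(n:ℤ) = 0), if_pos rfl]
        have hqq : (q:ℝ) ^ (n:ℕ) * (q ^ (-(n:ℤ)) * y) = y := by
          rw [← mul_assoc, ← zpow_natCast q n, ← zpow_add₀ hq0.ne']
          simp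
        rw [hqq]
      · -- -n < k < 0
        have hu : q ^ k * y ≤ q ^ (-(n:ℤ)+1) := (ht_ub k).trans (hmono (by omega))
        have h3' : q ^ (-(n:ℤ)+1) ≤ q ^ (-(n:ℤ)) := hmono (by omega)
        rw [hf, if_neg hnotIcc, if_neg (by omega : ¬k = 0),
          if_neg (by omega : ¬k = -(n:ℤ)), if_pos (⟨hkn, hk⟩ : -(n:ℤ) < k ∧ k < 0)]
        rcases lt_or_eq_of_le hu with hu' | hu'
        · rw [if_pos ⟨h1', hu'⟩]
        · rw [if_neg (fun hmem => absurd hu' (ne_of_lt hmem.2)),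
            if_pos ⟨hu'.ge, by rw [hu']; exact h3'⟩, hu']
          have hqq2 : (q:ℝ) ^ (n:ℕ) * q ^ (-(n:ℤ)+1) = q := by
            rw [← zpow_natCast q n, ← zpow_add₀ hq0.ne',
              show (n:ℤ) + (-(n:ℤ)+1) = 1 by ring, zpow_one]
          rw [hqq2, hφq]
          norm_num
    · -- k = 0
      rw [hf, zpow_zero, one_mul, if_pos hyIcc, if_pos rfl]
    · -- k > 0
      have hk1 : q ^ k ≤ q := by
        have := hmono (by omega : 1 ≤ k); rwa [zpow_one] at this
      have hu : q ^ k * y ≤ q := (ht_ub k).trans hk1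
      have h1n : (1:ℝ) ≤ q ^ (-(n:ℤ)+1) := hone_le (by omega)
      rw [hf, if_neg (by omega : ¬k = 0), if_neg (by omega : ¬k = -(n:ℤ)),
        if_neg (by omega : ¬(-(n:ℤ) < k ∧ k < 0))]
      split_ifs with hmem h2 h3
      · have : q ^ k * y = q := le_antisymm hu hmem.1
        rw [this, hφq]
      · exfalso; obtain ⟨h2a, -⟩ := h2; linarith
      · exfalso; obtain ⟨h3a, -⟩ := h3; linarith
      · rfl
  -- complex-cast value lemmas
  have hAc : ∀ k : ℤ, ((h (q ^ k * y) : ℝ) : ℂ) = if k = 0 then (s:ℂ) else 0 := by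
    intro k; rw [hA]; split_ifs <;> simp
  have hBc : ∀ k : ℤ, ((f (q ^ k * y) : ℝ) : ℂ) =
      if k = 0 then (Φ:ℂ) else if k = -(n:ℤ) then 1 - (Φ:ℂ)
      else if -(n:ℤ) < k ∧ k < 0 then 1 else 0 := by
    intro k; rw [hB]; split_ifs <;> simp
  have hs2c : (s:ℂ) * (s:ℂ) = (Φ:ℂ) * (1 - (Φ:ℂ)) := by exact_mod_cast hs2
  -- inner products of basis vectors
  have hδ : ∀ j k : ℤ, (inner ℂ (e j) (e k) : ℂ) = if j = k then 1 else 0 := by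
    intro j k
    rw [he j, he k, lp.inner_single_left]
    rcases eq_or_ne j k with rfl | hjk
    · rw [lp.single_apply_self]; simp
    · rw [lp.single_apply_ne 2 k 1 hjk]; simp [hjk]
  -- density of the span of the basis vectors
  have hdense : Dense ((Submodule.span ℂ (Set.range e) : Submodule ℂ (lp (fun _ : ℤ => ℂ) 2))
      : Set (lp (fun _ : ℤ => ℂ) 2)) := by
    intro x
    have hsum := lp.hasSum_single (E := fun _ : ℤ => ℂ) (p := 2) (by norm_num) x
    refine mem_closure_of_tendsto hsum (Filter.Eventually.of_forall fun sfin => ?_)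
    refine Submodule.sum_mem _ fun i _ => ?_
    have h1 : lp.single (E := fun _ : ℤ => ℂ) 2 i (x i) = (x i) • lp.single 2 i (1:ℂ) := by
      rw [← lp.single_smul]; norm_num
    rw [h1, ← he]
    exact Submodule.smul_mem _ _ (Submodule.subset_span ⟨i, rfl⟩)
  -- symmetry of the matrix
  have hsym : ∀ j k : ℤ, (inner ℂ (R (e j)) (e k) : ℂ) = inner ℂ (e j) (R (e k)) := by
    intro j k
    rw [hR j, hR k]
    simp only [inner_add_left, inner_add_right, inner_smul_left, inner_smul_right, hδ,
      Complex.conj_ofReal, mul_ite, mul_one, mul_zero]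
    rcases eq_or_ne j k with rfl | h1
    · simp [show ¬(j - (n:ℤ) = j) by omega, show ¬(j + (n:ℤ) = j) by omega,
        show ¬(j = j - (n:ℤ)) by omega, show ¬(j = j + (n:ℤ)) by omega]
    · rcases eq_or_ne j (k + n) with rfl | h2
      · simp [show k + (n:ℤ) - n = k by omega, show ¬(k + (n:ℤ) = k) by omega,
          show ¬(k + (n:ℤ) + n = k) by omega, show ¬(k + (n:ℤ) = k - n) by omega]
      · rcases eq_or_ne j (k - n) with rfl | h3
        · simp [show k - (n:ℤ) + n = k by omega, show ¬(k - (n:ℤ) - n = k) by omega,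
            show ¬(k - (n:ℤ) = k) by omega, show ¬(k - (n:ℤ) = k + n) by omega]
        · simp [show ¬(j - (n:ℤ) = k) by omega, show ¬(j + (n:ℤ) = k) by omega, h1, h2, h3]
  constructor
  · -- self-adjointness
    rw [ContinuousLinearMap.isSelfAdjoint_iff']
    refine ContinuousLinearMap.ext_on hdense ?_
    rintro _ ⟨k, rfl⟩
    refine ext_inner_right ℂ fun x => ?_
    rw [ContinuousLinearMap.adjoint_inner_left]
    have key : (innerSL ℂ (e k)).comp R = innerSL ℂ (R (e k)) := by
      refine ContinuousLinearMap.ext_on hdense ?_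
      rintro _ ⟨j, rfl⟩
      simpa using (hsym k j).symm
    simpa using DFunLike.congr_fun key x
  · -- idempotence
    refine ContinuousLinearMap.ext_on hdense ?_
    rintro _ ⟨k, rfl⟩
    have hki1 : k - (n:ℤ) + (n:ℤ) = k := by omega
    have hki2 : k + (n:ℤ) - (n:ℤ) = k := by omega
    rw [ContinuousLinearMap.comp_apply, hR k, map_add, map_add, map_smul, map_smul, map_smul,
      hR (k - n), hR k, hR (k + n), hki1, hki2]
    match_scalars <;>
      · simp only [hAc, hBc]
        split_ifs <;> first | (exfalso; omega) | linear_combination hs2c | linear_combination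
end

section
/- With notation as in the Powers–Rieffel construction (q ∈ (0,1), y ∈ (q,1], n ≥ 1, φ, h, f_n as above), the operator R on ℓ²(ℤ) defined by R e_k = h(q^k y) e_{k−n} + f_n(q^k y) e_k + h(q^{k+n} y) e_{k+n} is of trace class (indeed of finite rank), and its trace equals n. -/
theorem stmt_8 (q y : ℝ) (hq0 : 0 < q) (hq1 : q < 1) (hy : y ∈ Set.Ioc q 1)
    (n : ℕ) (hn : 1 ≤ n)
    (φ : ℝ → ℝ) (hφc : ContinuousOn φ (Set.Icc q 1))
    (hφ01 : ∀ t ∈ Set.Icc q 1, φ t ∈ Set.Icc (0 : ℝ) 1)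
    (hφq : φ q = 0) (hφ1 : φ 1 = 1)
    (h f : ℝ → ℝ)
    (hh : ∀ t, h t = if t ∈ Set.Icc q 1 then Real.sqrt (φ t * (1 - φ t)) else 0)
    (hf : ∀ t, f t =
      if t ∈ Set.Icc q 1 then φ t
      else if t ∈ Set.Ioo 1 (q ^ (-(n : ℤ) + 1)) then 1
      else if t ∈ Set.Icc (q ^ (-(n : ℤ) + 1)) (q ^ (-(n : ℤ))) then
        1 - φ (q ^ n * t)
      else 0)
    (e : ℤ → lp (fun _ : ℤ => ℂ) 2)
    (he : ∀ k : ℤ, e k = lp.single 2 k 1)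
    (R : lp (fun _ : ℤ => ℂ) 2 →L[ℂ] lp (fun _ : ℤ => ℂ) 2)
    (hR : ∀ k : ℤ, R (e k) =
      (h (q ^ k * y) : ℂ) • e (k - n) + (f (q ^ k * y) : ℂ) • e k +
        (h (q ^ (k + n) * y) : ℂ) • e (k + n)) :
    FiniteDimensional ℂ (LinearMap.range (R : lp (fun _ : ℤ => ℂ) 2 →ₗ[ℂ] lp (fun _ : ℤ => ℂ) 2)) ∧
      HasSum (fun k : ℤ => (inner ℂ (e k) (R (e k)) : ℂ)) (n : ℂ) := by
  obtain ⟨hyq, hy1⟩ := hy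
  have qne : q ≠ 0 := ne_of_gt hq0
  have hzpos : ∀ k : ℤ, (0:ℝ) < q ^ k := fun k => zpow_pos hq0 k
  have hanti : ∀ {a b : ℤ}, a ≤ b → q ^ b ≤ q ^ a :=
    fun hab => zpow_le_zpow_right_of_le_one₀ hq0 hq1.le hab
  have hup : ∀ k : ℤ, q ^ k * y ≤ q ^ k :=
    fun k => mul_le_of_le_one_right (hzpos k).le hy1
  have hlow : ∀ k : ℤ, q ^ (k + 1) < q ^ k * y := by
    intro k
    have := mul_lt_mul_of_pos_left hyq (hzpos k)
    rwa [zpow_add₀ qne, zpow_one]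
  -- the values of f on the orbit
  have hval : ∀ k : ℤ, f (q ^ k * y) =
      (if k = 0 then φ y else if k = -(n:ℤ) then 1 - φ y
        else if -(n:ℤ) < k ∧ k < 0 then 1 else 0) := by
    intro k
    rcases lt_trichotomy k 0 with hk | rfl | hk
    · rcases lt_trichotomy k (-(n:ℤ)) with hkn | rfl | hkn
      · -- k < -n : f = 0
        have h1 : q ^ (-(n:ℤ)) ≤ q ^ (k+1) := hanti (by omega)
        have h2 : q ^ (-(n:ℤ)) < q ^ k * y := lt_of_le_of_lt h1 (hlow k)
        have h3 : (1:ℝ) ≤ q ^ (-(n:ℤ)+1) := by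
          have := hanti (show -(n:ℤ)+1 ≤ 0 by omega)
          rwa [zpow_zero] at this
        have h4 : q ^ (-(n:ℤ)+1) ≤ q ^ (-(n:ℤ)) := hanti (by omega)
        rw [hf,
          if_neg (fun ht => absurd ht.2 (not_le.mpr (lt_of_le_of_lt h3 (lt_of_le_of_lt h4 h2)))),
          if_neg (fun ht => absurd ht.2 (not_lt.mpr (le_trans h4 h2.le))),
          if_neg (fun ht => absurd ht.2 (not_le.mpr h2))]
        simp only [if_neg (show ¬ k = 0 by omega), if_neg (show ¬ k = -(n:ℤ) by omega),
          if_neg (show ¬ (-(n:ℤ) < k ∧ k < 0) by omega)]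
      · -- k = -n : f = 1 - φ y
        have h1 : q ^ (-(n:ℤ)+1) < q ^ (-(n:ℤ)) * y := hlow _
        have h2 : q ^ (-(n:ℤ)) * y ≤ q ^ (-(n:ℤ)) := hup _
        have h3 : (1:ℝ) ≤ q ^ (-(n:ℤ)+1) := by
          have := hanti (show -(n:ℤ)+1 ≤ 0 by omega)
          rwa [zpow_zero] at this
        rw [hf]
        rw [if_neg (fun ht => absurd ht.2 (not_le.mpr (lt_of_le_of_lt h3 h1))),
          if_neg (fun ht => absurd ht.2 (not_lt.mpr h1.le)),
          if_pos ⟨h1.le, h2⟩]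
        have : q ^ n * (q ^ (-(n:ℤ)) * y) = y := by
          rw [← mul_assoc, ← zpow_natCast q n, ← zpow_add₀ qne]
          simp
        rw [this]
        rw [if_neg (show ¬ -(n:ℤ) = 0 by omega), if_pos rfl]
      · -- -n < k < 0
        have h0 : (1:ℝ) ≤ q ^ (k+1) := by
          have := hanti (show k+1 ≤ 0 by omega)
          rwa [zpow_zero] at this
        have hgt1 : 1 < q ^ k * y := lt_of_le_of_lt h0 (hlow k)
        have hle : q ^ k * y ≤ q ^ (-(n:ℤ)+1) := le_trans (hup k) (hanti (by omega))
        rw [hf, if_neg (fun ht => absurd ht.2 (not_le.mpr hgt1))]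
        rcases lt_or_eq_of_le hle with hlt | heq
        · rw [if_pos ⟨hgt1, hlt⟩]
          simp only [if_neg (show ¬ k = 0 by omega), if_neg (show ¬ k = -(n:ℤ) by omega),
            if_pos (show -(n:ℤ) < k ∧ k < 0 from ⟨hkn, hk⟩)]
        · rw [if_neg (fun ht => absurd ht.2 (not_lt.mpr heq.ge)),
            if_pos ⟨heq.ge, heq.le.trans (hanti (by omega))⟩]
          have : q ^ n * (q ^ k * y) = q := by
            rw [heq, ← zpow_natCast q n, ← zpow_add₀ qne]
            norm_num
          rw [this, hφq]
          simp only [if_neg (show ¬ k = 0 by omega), if_neg (show ¬ k = -(n:ℤ) by omega),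
            if_pos (show -(n:ℤ) < k ∧ k < 0 from ⟨hkn, hk⟩)]
          norm_num
    · -- k = 0
      rw [hf]
      simp only [zpow_zero, one_mul]
      rw [if_pos (show y ∈ Set.Icc q 1 from ⟨hyq.le, hy1⟩)]
      simp
    · -- k > 0 : f = 0
      have hle : q ^ k * y ≤ q := le_trans (hup k) (by simpa using hanti (show 1 ≤ k by omega))
      have hlt1 : q ^ k * y < 1 := lt_of_le_of_lt hle hq1
      have h3 : (1:ℝ) ≤ q ^ (-(n:ℤ)+1) := by
        have := hanti (show -(n:ℤ)+1 ≤ 0 by omega)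
        rwa [zpow_zero] at this
      rw [hf]
      have hrhs : (if k = 0 then φ y else if k = -(n:ℤ) then 1 - φ y
          else if -(n:ℤ) < k ∧ k < 0 then 1 else 0) = 0 := by
        simp only [if_neg (show ¬ k = 0 by omega), if_neg (show ¬ k = -(n:ℤ) by omega),
          if_neg (show ¬ (-(n:ℤ) < k ∧ k < 0) by omega)]
      rw [hrhs]
      by_cases hq' : q ≤ q ^ k * y
      · have heq : q ^ k * y = q := le_antisymm hle hq'
        rw [if_pos ⟨hq', hlt1.le⟩, heq, hφq]
      · rw [if_neg (fun ht => hq' ht.1),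
          if_neg (fun ht => absurd ht.1 (not_lt.mpr hlt1.le)),
          if_neg (fun ht => absurd ht.1 (not_le.mpr (lt_of_lt_of_le hlt1 h3)))]
  -- h vanishes except when q^m*y ∈ [q,1], which forces m ∈ {0,1}
  have hsupp : ∀ m : ℤ, h (q ^ m * y) ≠ 0 → 0 ≤ m ∧ m ≤ 1 := by
    intro m hm
    have hmem : q ^ m * y ∈ Set.Icc q 1 := by
      by_contra hc
      exact hm (by rw [hh, if_neg hc])
    constructor
    · by_contra hc
      have h0 : (1:ℝ) ≤ q ^ (m+1) := by
        have := hanti (show m+1 ≤ 0 by omega)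
        rwa [zpow_zero] at this
      exact absurd hmem.2 (not_le.mpr (lt_of_le_of_lt h0 (hlow m)))
    · by_contra hc
      have : q ^ m ≤ q ^ (2:ℤ) := hanti (by omega)
      have h2 : q ^ (2:ℤ) < q := by
        have : q * q < 1 * q := mul_lt_mul_of_pos_right hq1 hq0
        rw [one_mul] at this
        calc q ^ (2:ℤ) = q * q := by rw [show (2:ℤ) = 1 + 1 by norm_num, zpow_add₀ qne, zpow_one]
        _ < q := this
      exact absurd hmem.1 (not_le.mpr (lt_of_le_of_lt (le_trans (hup m) ‹q ^ m ≤ q ^ (2:ℤ)›) h2))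
  constructor
  · -- finite rank
    set V : Submodule ℂ (lp (fun _ : ℤ => ℂ) 2) :=
      Submodule.span ℂ (e '' (Set.Icc (-(n:ℤ)) 1)) with hV
    have hVfd : FiniteDimensional ℂ V :=
      FiniteDimensional.span_of_finite ℂ ((Set.finite_Icc _ _).image e)
    have hVclosed : IsClosed (V : Set (lp (fun _ : ℤ => ℂ) 2)) :=
      Submodule.closed_of_finiteDimensional V
    have hmemV : ∀ j : ℤ, -(n:ℤ) ≤ j → j ≤ 1 → e j ∈ V :=
      fun j h1 h2 => Submodule.subset_span ⟨j, ⟨h1, h2⟩, rfl⟩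
    have hmem : ∀ k : ℤ, R (e k) ∈ V := by
      intro k
      rw [hR k]
      refine Submodule.add_mem _ (Submodule.add_mem _ ?_ ?_) ?_
      · by_cases hc : h (q ^ k * y) = 0
        · simp [hc]
        · obtain ⟨h1, h2⟩ := hsupp k hc
          exact Submodule.smul_mem _ _ (hmemV _ (by omega) (by omega))
      · by_cases hc : f (q ^ k * y) = 0
        · simp [hc]
        · have : -(n:ℤ) ≤ k ∧ k ≤ 0 := by
            by_contra hco
            apply hc
            rw [hval k, if_neg (show ¬ k = 0 by omega), if_neg (show ¬ k = -(n:ℤ) by omega),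
              if_neg (show ¬ (-(n:ℤ) < k ∧ k < 0) by omega)]
          exact Submodule.smul_mem _ _ (hmemV _ (by omega) (by omega))
      · by_cases hc : h (q ^ (k+(n:ℤ)) * y) = 0
        · simp [hc]
        · obtain ⟨h1, h2⟩ := hsupp _ hc
          exact Submodule.smul_mem _ _ (hmemV _ (by omega) (by omega))
    have hRx : ∀ x, R x ∈ V := by
      intro x
      set W : Submodule ℂ (lp (fun _ : ℤ => ℂ) 2) := Submodule.span ℂ (Set.range e) with hW
      have hdense : W.topologicalClosure = ⊤ := by
        rw [Submodule.topologicalClosure_eq_top_iff]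
        rw [Submodule.eq_bot_iff]
        intro z hz
        have hz' : ∀ k : ℤ, (z : ∀ _ : ℤ, ℂ) k = 0 := by
          intro k
          have := hz (e k) (Submodule.subset_span ⟨k, rfl⟩)
          rw [he k, lp.inner_single_left] at this
          simpa using this
        ext k
        exact hz' k
      set U : Submodule ℂ (lp (fun _ : ℤ => ℂ) 2) := V.comap (R : lp (fun _ : ℤ => ℂ) 2 →ₗ[ℂ] lp (fun _ : ℤ => ℂ) 2) with hU
      have hUclosed : IsClosed (U : Set (lp (fun _ : ℤ => ℂ) 2)) :=
        hVclosed.preimage R.continuous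
      have hWU : W ≤ U := by
        rw [hW, Submodule.span_le]
        rintro _ ⟨k, rfl⟩
        exact hmem k
      have : (⊤ : Submodule ℂ (lp (fun _ : ℤ => ℂ) 2)) ≤ U := by
        rw [← hdense]
        calc W.topologicalClosure ≤ U.topologicalClosure :=
              Submodule.topologicalClosure_mono hWU
          _ = U := hUclosed.submodule_topologicalClosure_eq
      exact this (Set.mem_univ x)
    have hle : LinearMap.range (R : lp (fun _ : ℤ => ℂ) 2 →ₗ[ℂ] lp (fun _ : ℤ => ℂ) 2) ≤ V := by
      rintro _ ⟨x, rfl⟩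
      exact hRx x
    exact Submodule.finiteDimensional_of_le hle
  · -- trace
    have hdiag : ∀ k : ℤ, (inner ℂ (e k) (R (e k)) : ℂ) = (f (q ^ k * y) : ℂ) := by
      intro k
      rw [hR k]
      simp only [he, inner_add_right, inner_smul_right, lp.inner_single_left]
      rw [lp.single_apply_ne 2 _ _ (show (k:ℤ) ≠ k - n by omega),
        lp.single_apply_ne 2 _ _ (show (k:ℤ) ≠ k + n by omega),
        lp.single_apply_self]
      simp
    have hFeq : ∀ k : ℤ, (f (q ^ k * y) : ℂ) =
        (if k = 0 then (φ y : ℂ) else 0) + (if k = -(n:ℤ) then 1 - (φ y : ℂ) else 0) +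
          (if k ∈ Finset.Ioo (-(n:ℤ)) 0 then (1:ℂ) else 0) := by
      intro k
      rw [hval k]
      simp only [Finset.mem_Ioo]
      split_ifs <;> first | (exfalso; omega) | (push_cast; ring)
    have H1 : HasSum (fun k : ℤ => if k = 0 then (φ y : ℂ) else 0) (φ y : ℂ) :=
      hasSum_ite_eq 0 _
    have H2 : HasSum (fun k : ℤ => if k = -(n:ℤ) then 1 - (φ y : ℂ) else 0)
        (1 - (φ y : ℂ)) := hasSum_ite_eq (-(n:ℤ)) _
    have H3 : HasSum (fun k : ℤ => if k ∈ Finset.Ioo (-(n:ℤ)) 0 then (1:ℂ) else 0)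
        ((n:ℂ) - 1) := by
      have hs := hasSum_sum_of_ne_finset_zero
        (s := Finset.Ioo (-(n:ℤ)) 0)
        (L := SummationFilter.unconditional ℤ)
        (f := fun k : ℤ => if k ∈ Finset.Ioo (-(n:ℤ)) 0 then (1:ℂ) else 0)
        (fun b hb => if_neg hb)
      have hsum : (∑ b ∈ Finset.Ioo (-(n:ℤ)) 0,
          if b ∈ Finset.Ioo (-(n:ℤ)) 0 then (1:ℂ) else 0) = ((n:ℂ) - 1) := by
        have hcongr : (∑ b ∈ Finset.Ioo (-(n:ℤ)) 0,
            if b ∈ Finset.Ioo (-(n:ℤ)) 0 then (1:ℂ) else 0)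
            = ∑ _b ∈ Finset.Ioo (-(n:ℤ)) 0, (1:ℂ) :=
          Finset.sum_congr rfl (fun b hb => if_pos hb)
        rw [hcongr, Finset.sum_const, nsmul_eq_mul, mul_one, Int.card_Ioo]
        have h5 : ((0:ℤ) - -(n:ℤ) - 1).toNat = n - 1 := by omega
        rw [h5, Nat.cast_sub hn]
        norm_num
      rwa [hsum] at hs
    have Htot := (H1.add H2).add H3
    have heq : (fun k : ℤ => (inner ℂ (e k) (R (e k)) : ℂ)) =
        (fun k : ℤ => (if k = 0 then (φ y : ℂ) else 0) +
          (if k = -(n:ℤ) then 1 - (φ y : ℂ) else 0) +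
          (if k ∈ Finset.Ioo (-(n:ℤ)) 0 then (1:ℂ) else 0)) :=
      funext fun k => (hdiag k).trans (hFeq k)
    rw [show (n:ℂ) = (φ y : ℂ) + (1 - (φ y : ℂ)) + ((n:ℂ) - 1) by ring, heq]
    exact Htot
end
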